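/- Let H be a self-adjoint operator on a finite-dimensional complex inner product space, T a linear operator on the same space with rank T ≤ p, and μ ∈ ℝ such that ⟨(H + T) f, f⟩ ≥ μ ⟨f, f⟩ for all f. Then for every ε > 0, the number of eigenvalues of H strictly less than μ − ε (equivalently, ≤ μ − ε) is at most p. -/
import Mathlib


open Module
open scoped InnerProductSpace

/-- On the sum of eigenspaces of a symmetric operator with eigenvalues at most `c`,
the quadratic form is bounded by `c * ‖x‖²`. -/
lemma key_quad_bound
    (V : Type) [NormedAddCommGroup V] [InnerProductSpace ℂ V]
    (H : V →ₗ[ℂ] V) (hH : LinearMap.IsSymmetric H) (c : ℝ) (x : V)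
    (hx : x ∈ ⨆ lam : ℝ, ⨆ _ : lam ≤ c, Module.End.eigenspace H (lam : ℂ)) :
    (⟪H x, x⟫_ℂ).re ≤ c * ‖x‖ ^ 2 := by
  obtain ⟨f, hf, rfl⟩ := (Submodule.mem_iSup_iff_exists_finsupp _ _).mp hx
  set s := f.support with hs
  have hmem : ∀ i ∈ s, f i ∈ Module.End.eigenspace H (i : ℂ) ∧ i ≤ c := by
    intro i hi
    have h0 := hf i
    by_cases h : i ≤ c
    · rw [iSup_pos h] at h0
      exact ⟨h0, h⟩
    · rw [iSup_neg h] at h0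
      exact absurd ((Submodule.mem_bot ℂ).mp h0) (Finsupp.mem_support_iff.mp hi)
  have hev : ∀ i ∈ s, H (f i) = (i : ℂ) • f i := fun i hi =>
    Module.End.mem_eigenspace_iff.mp (hmem i hi).1
  have horth : ∀ i ∈ s, ∀ j ∈ s, i ≠ j → ⟪f i, f j⟫_ℂ = 0 := by
    intro i hi j hj hij
    have hne : (i : ℂ) ≠ (j : ℂ) := by exact_mod_cast hij
    exact hH.orthogonalFamily_eigenspaces hne ⟨f i, (hmem i hi).1⟩ ⟨f j, (hmem j hj).1⟩
  have hsum : (f.sum fun _ xi => xi) = ∑ i ∈ s, f i := rfl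
  rw [hsum]
  have h1 : ⟪H (∑ i ∈ s, f i), ∑ j ∈ s, f j⟫_ℂ
      = ∑ i ∈ s, ((i : ℂ) * ((‖f i‖ : ℂ)) ^ 2) := by
    rw [map_sum, sum_inner]
    refine Finset.sum_congr rfl fun i hi => ?_
    rw [inner_sum, Finset.sum_eq_single_of_mem i hi]
    · rw [hev i hi, inner_smul_left, Complex.conj_ofReal, inner_self_eq_norm_sq_to_K]
      norm_num
    · intro j hj hji
      rw [hev i hi, inner_smul_left, horth i hi j hj (Ne.symm hji), mul_zero]
  have h2 : ⟪(∑ i ∈ s, f i), ∑ j ∈ s, f j⟫_ℂ = ∑ i ∈ s, ((‖f i‖ : ℂ)) ^ 2 := by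
    rw [sum_inner]
    refine Finset.sum_congr rfl fun i hi => ?_
    rw [inner_sum, Finset.sum_eq_single_of_mem i hi]
    · rw [inner_self_eq_norm_sq_to_K]
      norm_num
    · intro j hj hji
      exact horth i hi j hj (Ne.symm hji)
  have hnorm : ‖∑ i ∈ s, f i‖ ^ 2 = ∑ i ∈ s, ‖f i‖ ^ 2 := by
    have h3 := congrArg Complex.re h2
    rw [inner_self_eq_norm_sq_to_K] at h3
    simpa [Complex.re_sum, ← Complex.ofReal_pow] using h3
  rw [h1, hnorm, Complex.re_sum, Finset.mul_sum]
  refine Finset.sum_le_sum fun i hi => ?_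
  have : ((i : ℂ) * ((‖f i‖ : ℂ)) ^ 2) = ((i * ‖f i‖ ^ 2 : ℝ) : ℂ) := by push_cast; ring
  rw [this, Complex.ofReal_re]
  exact mul_le_mul_of_nonneg_right (hmem i hi).2 (sq_nonneg _)

/-- A rank-`p` perturbation `T` making `H + T ≥ μ` bounds the counting
function of eigenvalues of `H` below `μ - ε` by `p`. -/
theorem stmt_2
    (V : Type) [NormedAddCommGroup V] [InnerProductSpace ℂ V]
    [FiniteDimensional ℂ V]
    (H T : V →ₗ[ℂ] V) (hH : LinearMap.IsSymmetric H)
    (p : ℕ) (hT : finrank ℂ (LinearMap.range T) ≤ p)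
    (μ : ℝ)
    (hlow : ∀ f : V, μ * ‖f‖ ^ 2 ≤ (⟪(H + T) f, f⟫_ℂ).re) :
    ∀ ε : ℝ, 0 < ε →
      finrank ℂ ↥(⨆ lam : ℝ, ⨆ _ : lam ≤ μ - ε,
        Module.End.eigenspace H (lam : ℂ)) ≤ p := by
  intro ε hε
  by_contra hcon
  push_neg at hcon
  set W : Submodule ℂ V := ⨆ lam : ℝ, ⨆ _ : lam ≤ μ - ε,
    Module.End.eigenspace H (lam : ℂ) with hW
  set K : Submodule ℂ V := LinearMap.ker T with hK
  have hrn : finrank ℂ (LinearMap.range T) + finrank ℂ K = finrank ℂ V :=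
    LinearMap.finrank_range_add_finrank_ker T
  have hsupinf : finrank ℂ ↥(W ⊔ K) + finrank ℂ ↥(W ⊓ K)
      = finrank ℂ W + finrank ℂ K :=
    Submodule.finrank_sup_add_finrank_inf_eq W K
  have hle : finrank ℂ ↥(W ⊔ K) ≤ finrank ℂ V := Submodule.finrank_le _
  have hpos : 0 < finrank ℂ ↥(W ⊓ K) := by omega
  haveI : Nontrivial ↥(W ⊓ K) := finrank_pos_iff.mp hpos
  obtain ⟨⟨g, hgWK⟩, hg0⟩ := exists_ne (0 : ↥(W ⊓ K))
  have hgW : g ∈ W := hgWK.1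
  have hgK : g ∈ K := hgWK.2
  have hgne : g ≠ 0 := by
    intro h
    apply hg0
    ext
    exact h
  have hTg : T g = 0 := hgK
  have hupper : (⟪H g, g⟫_ℂ).re ≤ (μ - ε) * ‖g‖ ^ 2 :=
    key_quad_bound V H hH (μ - ε) g hgW
  have hlower : μ * ‖g‖ ^ 2 ≤ (⟪H g, g⟫_ℂ).re := by
    have := hlow g
    rwa [LinearMap.add_apply, hTg, add_zero] at this
  have hng : 0 < ‖g‖ := norm_pos_iff.mpr hgne
  nlinarith [sq_nonneg ‖g‖, mul_pos hng hng]
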